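/- If a linear order ≺ on the edge set of an acyclic directed graph satisfies (U₁), (U₂) and (U₃), then it satisfies the nesting condition (Q₂). -/
import Mathlib


structure Digraph' (V E : Type) where
  s : E → V
  t : E → V

def conv {E : Type} [LinearOrder E] (X : Set E) : Set E :=
  {y | ∃ a ∈ X, ∃ b ∈ X, a ≤ y ∧ y ≤ b}

namespace Digraph'

variable {V E : Type} (G : Digraph' V E)

/-- One edge can be followed by another. -/
def step (e f : E) : Prop := G.t e = G.s f

/-- The reachable order: a directed path starts with `e₁` and ends with `e₂`
(including the case `e₁ = e₂`). -/
def reach : E → E → Prop := Relation.ReflTransGen G.step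

/-- No directed cycles. -/
def Acyclic : Prop := ∀ e, ¬ Relation.TransGen G.step e e

/-- Incoming edges of a vertex. -/
def I (v : V) : Set E := {e | G.t e = v}

/-- Outgoing edges of a vertex. -/
def O (v : V) : Set E := {e | G.s e = v}

/-- All edges incident to a vertex `v` (incoming or outgoing). -/
def Ev (v : V) : Set E := G.I v ∪ G.O v

variable [LinearOrder E]

/-- (U₁): reachability implies order. -/
def U1 : Prop := ∀ e₁ e₂ : E, G.reach e₁ e₂ → e₁ ≤ e₂

/-- (U₂): for every vertex, the hulls of incoming and outgoing edges are disjoint and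
together give the hull of all incident edges. -/
def U2 : Prop := ∀ v : V,
  conv (G.I v) ∩ conv (G.O v) = ∅ ∧ conv (G.Ev v) = conv (G.I v) ∪ conv (G.O v)

/-- (U₃). -/
def U3 : Prop := ∀ v₁ v₂ : V,
  ((G.I v₁ ∩ conv (G.I v₂)).Nonempty → conv (G.I v₁) ⊆ conv (G.I v₂)) ∧
  ((G.O v₁ ∩ conv (G.O v₂)).Nonempty → conv (G.O v₁) ⊆ conv (G.O v₂))

/-- (Q₂), the nesting condition. -/
def Q2 : Prop := ∀ e₁ e e₂ : E, e₁ < e → e < e₂ →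
  (G.t e₁ = G.t e₂ → G.I (G.t e) ⊆ conv (G.I (G.t e₁))) ∧
  (G.s e₁ = G.s e₂ → G.O (G.s e) ⊆ conv (G.O (G.s e₁))) ∧
  (G.t e₁ = G.s e₂ →
    G.I (G.t e) ⊆ conv (G.I (G.t e₁)) ∨ G.O (G.s e) ⊆ conv (G.O (G.s e₂)))

end Digraph'

open Digraph' in
/-- (U₁), (U₂) and (U₃) imply the nesting condition (Q₂). -/
theorem Q2_of_U1_U2_U3 {V E : Type} [Fintype V] [Fintype E] [LinearOrder E]
    (G : Digraph' V E) (hG : G.Acyclic) (hU1 : G.U1) (hU2 : G.U2) (hU3 : G.U3) :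
    G.Q2 := by
  intro e₁ e e₂ h1 h2
  refine ⟨?_, ?_, ?_⟩
  · intro hv
    have he : e ∈ conv (G.I (G.t e₁)) :=
      ⟨e₁, rfl, e₂, hv.symm, h1.le, h2.le⟩
    exact fun f hf =>
      (hU3 (G.t e) (G.t e₁)).1 ⟨e, rfl, he⟩ ⟨f, hf, f, hf, le_rfl, le_rfl⟩
  · intro hv
    have he : e ∈ conv (G.O (G.s e₁)) :=
      ⟨e₁, rfl, e₂, hv.symm, h1.le, h2.le⟩
    exact fun f hf =>
      (hU3 (G.s e) (G.s e₁)).2 ⟨e, rfl, he⟩ ⟨f, hf, f, hf, le_rfl, le_rfl⟩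
  · intro hv
    have he : e ∈ conv (G.Ev (G.t e₁)) :=
      ⟨e₁, Or.inl rfl, e₂, Or.inr hv.symm, h1.le, h2.le⟩
    rw [(hU2 (G.t e₁)).2] at he
    rcases he with he | he
    · exact Or.inl fun f hf =>
        (hU3 (G.t e) (G.t e₁)).1 ⟨e, rfl, he⟩ ⟨f, hf, f, hf, le_rfl, le_rfl⟩
    · rw [hv] at he
      exact Or.inr fun f hf =>
        (hU3 (G.s e) (G.s e₂)).2 ⟨e, rfl, he⟩ ⟨f, hf, f, hf, le_rfl, le_rfl⟩
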